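/- Let N, N1, M, K, D, Δ be parameters with Δ ≥ 4, and suppose that N^K · (eD)^(M/D) · exp(−(Δ−1)·ln((Δ−1)/3)·K·N1/D) < 1. Then there exists a table E : [N] × [N1] → [M] such that for every B ⊆ [N] with |B| = K and every A ⊆ [M] with |A| = M/D, the number of A-cells in B × [N1] is at most Δ·(|A|/M)·|B|·N1. -/

import Mathlib

open scoped Classical
open Finset

-- number of E on a fixed pair (B,A) whose A-cell count exceeds t, weighted bound
lemma aux_badCount (N N1 M : ℕ) (B : Finset (Fin N)) (A : Finset (Fin M))
    (s t : ℝ) (hs : 0 ≤ s) :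
    (((Finset.univ.filter (fun E : Fin N → Fin N1 → Fin M =>
      t < (((B ×ˢ (Finset.univ : Finset (Fin N1))).filter fun p => E p.1 p.2 ∈ A).card : ℝ))).card : ℝ))
      * Real.exp (s * t)
      ≤ ((A.card : ℝ) * Real.exp s + ((M : ℝ) - (A.card : ℝ))) ^ (B.card * N1)
        * (M : ℝ) ^ ((N - B.card) * N1) := by
  set w : Fin N → Fin N1 → Fin M → ℝ :=
    fun u v m => if u ∈ B ∧ m ∈ A then Real.exp s else 1 with hw
  set X : (Fin N → Fin N1 → Fin M) → ℕ :=
    fun E => ((B ×ˢ (Finset.univ : Finset (Fin N1))).filter fun p => E p.1 p.2 ∈ A).card with hX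
  have hprod : ∀ E : Fin N → Fin N1 → Fin M,
      (∏ u, ∏ v, w u v (E u v)) = Real.exp s ^ X E := by
    intro E
    rw [← Finset.prod_product']
    have hset : ((Finset.univ ×ˢ Finset.univ : Finset (Fin N × Fin N1)).filter
        (fun p => p.1 ∈ B ∧ E p.1 p.2 ∈ A))
        = ((B ×ˢ (Finset.univ : Finset (Fin N1))).filter fun p => E p.1 p.2 ∈ A) := by
      ext p; simp [and_comm]
    calc (∏ p : Fin N × Fin N1, w p.1 p.2 (E p.1 p.2))
        = ∏ p ∈ (Finset.univ ×ˢ Finset.univ : Finset (Fin N × Fin N1)).filter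
            (fun p => p.1 ∈ B ∧ E p.1 p.2 ∈ A), Real.exp s := by
          rw [Finset.prod_filter]
          simp [hw]
      _ = Real.exp s ^ X E := by rw [Finset.prod_const, hset]
  have hsum : (∑ E : Fin N → Fin N1 → Fin M, ∏ u, ∏ v, w u v (E u v))
      = ∏ u, ∏ v, ∑ m, w u v m := by
    have h1 : ∀ u : Fin N, (∑ g : Fin N1 → Fin M, ∏ v, w u v (g v)) = ∏ v, ∑ m, w u v m := by
      intro u
      symm
      rw [Finset.prod_univ_sum, Fintype.piFinset_univ]
    symm
    calc (∏ u, ∏ v, ∑ m, w u v m) = ∏ u, ∑ g : Fin N1 → Fin M, ∏ v, w u v (g v) := by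
          exact Finset.prod_congr rfl (fun u _ => (h1 u).symm)
      _ = ∑ E : Fin N → Fin N1 → Fin M, ∏ u, ∏ v, w u v (E u v) := by
          rw [Finset.prod_univ_sum, Fintype.piFinset_univ]
  have hcell : ∀ (u : Fin N) (v : Fin N1), (∑ m : Fin M, w u v m)
      = if u ∈ B then ((A.card : ℝ) * Real.exp s + ((M : ℝ) - (A.card : ℝ))) else (M : ℝ) := by
    intro u v
    have hAle : A.card ≤ M := by
      simpa using Finset.card_le_card (Finset.subset_univ A)
    by_cases hu : u ∈ B
    · simp only [hw, hu, true_and, if_pos]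
      rw [Finset.sum_ite, Finset.sum_const, Finset.sum_const]
      have h1 : (Finset.univ.filter (fun m : Fin M => m ∈ A)) = A := by
        ext m; simp
      have h2 : (Finset.univ.filter (fun m : Fin M => ¬ m ∈ A)).card = M - A.card := by
        have := Finset.card_filter_add_card_filter_not
          (s := (Finset.univ : Finset (Fin M))) (p := fun m => m ∈ A)
        simp only [Finset.card_univ, Fintype.card_fin, h1] at this ⊢
        omega
      rw [h1, h2, nsmul_eq_mul, nsmul_eq_mul, mul_one, Nat.cast_sub hAle]
    · simp [hw, hu]
  have hval : (∏ u, ∏ v, ∑ m, w u v m)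
      = ((A.card : ℝ) * Real.exp s + ((M : ℝ) - (A.card : ℝ))) ^ (B.card * N1)
        * (M : ℝ) ^ ((N - B.card) * N1) := by
    set r : ℝ := (A.card : ℝ) * Real.exp s + ((M : ℝ) - (A.card : ℝ)) with hr
    calc (∏ u, ∏ v, ∑ m, w u v m)
        = ∏ u : Fin N, (if u ∈ B then r ^ N1 else (M : ℝ) ^ N1) := by
          refine Finset.prod_congr rfl (fun u _ => ?_)
          rw [Finset.prod_congr rfl (fun v _ => hcell u v), Finset.prod_const,
            Finset.card_univ, Fintype.card_fin, apply_ite (fun x : ℝ => x ^ N1)]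
      _ = (∏ u ∈ B, (if u ∈ B then r ^ N1 else (M : ℝ) ^ N1))
          * ∏ u ∈ Bᶜ, (if u ∈ B then r ^ N1 else (M : ℝ) ^ N1) :=
          (Finset.prod_mul_prod_compl B _).symm
      _ = (r ^ N1) ^ B.card * ((M : ℝ) ^ N1) ^ (N - B.card) := by
          rw [Finset.prod_congr rfl (fun u hu => if_pos hu),
            Finset.prod_congr rfl (fun u hu => if_neg (by simpa using hu)),
            Finset.prod_const, Finset.prod_const, Finset.card_compl,
            Fintype.card_fin]
      _ = r ^ (B.card * N1) * (M : ℝ) ^ ((N - B.card) * N1) := by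
          rw [← pow_mul, ← pow_mul, Nat.mul_comm N1 B.card, Nat.mul_comm N1 (N - B.card)]
  calc ((Finset.univ.filter (fun E : Fin N → Fin N1 → Fin M =>
        t < ((X E : ℕ) : ℝ))).card : ℝ) * Real.exp (s * t)
      = ∑ _E ∈ Finset.univ.filter (fun E : Fin N → Fin N1 → Fin M =>
          t < ((X E : ℕ) : ℝ)), Real.exp (s * t) := by
        rw [Finset.sum_const, nsmul_eq_mul]
    _ ≤ ∑ E ∈ Finset.univ.filter (fun E : Fin N → Fin N1 → Fin M =>
          t < ((X E : ℕ) : ℝ)), Real.exp s ^ X E := by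
        refine Finset.sum_le_sum (fun E hE => ?_)
        have hE' : t < ((X E : ℕ) : ℝ) := (Finset.mem_filter.mp hE).2
        rw [← Real.exp_nat_mul]
        exact Real.exp_le_exp.mpr (by nlinarith)
    _ ≤ ∑ E : Fin N → Fin N1 → Fin M, Real.exp s ^ X E := by
        refine Finset.sum_le_sum_of_subset_of_nonneg (Finset.filter_subset _ _)
          (fun E _ _ => pow_nonneg (Real.exp_nonneg s) _)
    _ = ∑ E : Fin N → Fin N1 → Fin M, ∏ u, ∏ v, w u v (E u v) :=
        Finset.sum_congr rfl (fun E _ => (hprod E).symm)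
    _ = _ := hsum.trans hval

lemma aux_choose (M D : ℕ) (hD : 0 < D) (hdvd : D ∣ M) :
    ((M.choose (M / D) : ℕ) : ℝ) ≤ (Real.exp 1 * D) ^ (M / D) := by
  set a := M / D with ha
  have hMa : M = D * a := (Nat.div_mul_cancel hdvd).symm.trans (Nat.mul_comm _ _)
  have hfac : (0 : ℝ) < (a.factorial : ℝ) := by positivity
  have h1 : ((M.choose a : ℕ) : ℝ) ≤ (M : ℝ) ^ a / (a.factorial : ℝ) :=
    Nat.choose_le_pow_div a M
  have h2 : ((a : ℝ)) ^ a ≤ Real.exp 1 ^ a * (a.factorial : ℝ) := by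
    have h3 : ((a : ℝ)) ^ a / (a.factorial : ℝ) ≤ Real.exp a := by
      refine le_trans ?_ (Real.sum_le_exp_of_nonneg (by positivity) (a + 1))
      refine Finset.single_le_sum (f := fun i => (a : ℝ) ^ i / (i.factorial : ℝ))
        (fun i _ => by positivity) (Finset.self_mem_range_succ a)
    have h4 : Real.exp (a : ℝ) = Real.exp 1 ^ a := by
      rw [← Real.exp_nat_mul, mul_one]
    rw [h4] at h3
    calc ((a : ℝ)) ^ a = ((a : ℝ)) ^ a / (a.factorial : ℝ) * (a.factorial : ℝ) := by
          field_simp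
      _ ≤ Real.exp 1 ^ a * (a.factorial : ℝ) := by
          exact mul_le_mul_of_nonneg_right h3 hfac.le
  calc ((M.choose a : ℕ) : ℝ) ≤ (M : ℝ) ^ a / (a.factorial : ℝ) := h1
    _ = (D : ℝ) ^ a * ((a : ℝ) ^ a / (a.factorial : ℝ)) := by
        rw [hMa]; push_cast; rw [mul_pow]; ring
    _ ≤ (D : ℝ) ^ a * (Real.exp 1 ^ a * (a.factorial : ℝ) / (a.factorial : ℝ)) := by
        refine mul_le_mul_of_nonneg_left ?_ (by positivity)
        exact div_le_div_of_nonneg_right (c := (a.factorial : ℝ)) h2 hfac.le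
    _ = (Real.exp 1 * D) ^ a := by
        field_simp [mul_pow]; ring


set_option maxHeartbeats 1000000 in

/-- Probabilistic existence of a balanced table: if
N^K · (eD)^(M/D) · exp(−(Δ−1)·ln((Δ−1)/3)·K·N1/D) < 1, then there is a table
E : [N] × [N1] → [M] in which, for every row set B of size K and color set A of
size M/D, the number of A-cells in B × [N1] is at most Δ·(|A|/M)·|B|·N1. -/
theorem stmt_8 (N N1 M K D : ℕ) (hM : 0 < M) (hD : 0 < D) (hdvd : D ∣ M)
    (Δ : ℝ) (hΔ : 4 ≤ Δ)
    (hsmall : (N : ℝ) ^ K * (Real.exp 1 * D) ^ (M / D) *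
        Real.exp (-((Δ - 1) * Real.log ((Δ - 1) / 3) * ((K : ℝ) * N1 / D))) < 1) :
    ∃ E : Fin N → Fin N1 → Fin M, ∀ B : Finset (Fin N), ∀ A : Finset (Fin M),
      B.card = K → A.card = M / D →
      (((B ×ˢ (Finset.univ : Finset (Fin N1))).filter fun p => E p.1 p.2 ∈ A).card : ℝ) ≤
        Δ * ((A.card : ℝ) / M) * B.card * N1 := by
  by_contra hcon
  push_neg at hcon
  set a := M / D with ha
  have haD : (a : ℝ) * D = M := by exact_mod_cast Nat.div_mul_cancel hdvd
  have hD' : (0 : ℝ) < D := by exact_mod_cast hD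
  have hM' : (0 : ℝ) < M := by exact_mod_cast hM
  have hp : (a : ℝ) / M = 1 / D := by
    rw [div_eq_div_iff hM'.ne' hD'.ne', one_mul]; exact haD
  set L := Real.log ((Δ - 1) / 3) with hL
  have hL0 : 0 ≤ L := Real.log_nonneg (by linarith)
  set s := L + 1 with hs
  have hs0 : (0 : ℝ) ≤ s := by linarith
  set t : ℝ := Δ * ((a : ℝ) / M) * K * N1 with ht
  set β : ℝ := (M : ℝ) ^ (N * N1) *
    Real.exp (-((Δ - 1) * L * ((K : ℝ) * N1 / D))) with hβ
  set Bad : Finset (Fin N) × Finset (Fin M) → Finset (Fin N → Fin N1 → Fin M) :=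
    fun BA => Finset.univ.filter (fun E =>
      t < (((BA.1 ×ˢ (Finset.univ : Finset (Fin N1))).filter
        fun p => E p.1 p.2 ∈ BA.2).card : ℝ)) with hBad
  set P : Finset (Finset (Fin N) × Finset (Fin M)) :=
    (Finset.powersetCard K Finset.univ) ×ˢ (Finset.powersetCard a Finset.univ) with hP
  -- every E is in some Bad set
  have hcover : (Finset.univ : Finset (Fin N → Fin N1 → Fin M)) ⊆ P.biUnion Bad := by
    intro E _
    obtain ⟨B, A, hB, hA, hlt⟩ := hcon E
    refine Finset.mem_biUnion.mpr ⟨(B, A), ?_, ?_⟩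
    · simp [hP, Finset.mem_powersetCard_univ, hB, hA]
    · simp only [hBad, Finset.mem_filter, Finset.mem_univ, true_and]
      rw [hA, hB] at hlt
      exact hlt
  have hcard_univ : ((Fintype.card (Fin N → Fin N1 → Fin M) : ℕ) : ℝ) = (M : ℝ) ^ (N * N1) := by
    rw [Fintype.card_fun, Fintype.card_fun, Fintype.card_fin, Fintype.card_fin,
      Fintype.card_fin, ← pow_mul, Nat.mul_comm N1 N]
    push_cast
    ring
  -- per-pair bound
  have hpair : ∀ BA ∈ P, ((Bad BA).card : ℝ) ≤ β := by
    rintro ⟨B, A⟩ hBA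
    rw [hP, Finset.mem_product, Finset.mem_powersetCard_univ,
      Finset.mem_powersetCard_univ] at hBA
    obtain ⟨hB, hA⟩ := hBA
    have hKN : K ≤ N := by
      rw [← hB]; simpa using Finset.card_le_card (Finset.subset_univ B)
    have key := aux_badCount N N1 M B A s t hs0
    rw [hA, hB] at key
    have haM : (a : ℝ) ≤ M := by
      have ha0 : (0 : ℝ) ≤ (a : ℝ) := Nat.cast_nonneg a
      have hD1 : (1 : ℝ) ≤ (D : ℝ) := by exact_mod_cast hD
      nlinarith
    set θ : ℝ := ((a : ℝ) / M) * (Real.exp s - 1) with hθ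
    have hrle : (a : ℝ) * Real.exp s + ((M : ℝ) - a) ≤ (M : ℝ) * Real.exp θ := by
      have h1 := Real.add_one_le_exp θ
      have h2 : (a : ℝ) * Real.exp s + ((M : ℝ) - a) = (M : ℝ) * (θ + 1) := by
        rw [hθ]; field_simp; ring
      rw [h2]
      exact mul_le_mul_of_nonneg_left h1 hM'.le
    have hr0 : (0 : ℝ) ≤ (a : ℝ) * Real.exp s + ((M : ℝ) - a) := by
      have := Real.exp_nonneg s
      nlinarith
    have key2 : ((Bad (B, A)).card : ℝ) * Real.exp (s * t)
        ≤ (M : ℝ) ^ (N * N1) * Real.exp ((K * N1 : ℕ) * θ) := by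
      refine key.trans ?_
      have h3 : ((a : ℝ) * Real.exp s + ((M : ℝ) - a)) ^ (K * N1)
          ≤ ((M : ℝ) * Real.exp θ) ^ (K * N1) := pow_le_pow_left₀ hr0 hrle _
      calc ((a : ℝ) * Real.exp s + ((M : ℝ) - a)) ^ (K * N1) * (M : ℝ) ^ ((N - K) * N1)
          ≤ ((M : ℝ) * Real.exp θ) ^ (K * N1) * (M : ℝ) ^ ((N - K) * N1) := by
            exact mul_le_mul_of_nonneg_right h3 (by positivity)
        _ = (M : ℝ) ^ (K * N1 + (N - K) * N1) * Real.exp θ ^ (K * N1) := by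
            rw [mul_pow, pow_add]; ring
        _ = (M : ℝ) ^ (N * N1) * Real.exp ((K * N1 : ℕ) * θ) := by
            rw [Real.exp_nat_mul]
            congr 2
            have hnn : K * N1 + (N - K) * N1 = N * N1 := by
              rw [← Nat.add_mul, Nat.add_sub_cancel' hKN]
            rw [hnn]
    -- exponent comparison
    have hexp : ((K * N1 : ℕ) : ℝ) * θ - s * t ≤ -((Δ - 1) * L * ((K : ℝ) * N1 / D)) := by
      have hexps : Real.exp s = Real.exp 1 * ((Δ - 1) / 3) := by
        rw [hs, Real.exp_add, Real.exp_log (by linarith), mul_comm]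
      have hkey : Real.exp s - 1 - s * Δ ≤ -((Δ - 1) * L) := by
        rw [hexps, hs]
        have he : Real.exp 1 < 2.7182818286 := Real.exp_one_lt_d9
        nlinarith
      have hc : (0 : ℝ) ≤ (K : ℝ) * N1 / D := by positivity
      have h5 : ((K * N1 : ℕ) : ℝ) * θ - s * t
          = ((K : ℝ) * N1 / D) * (Real.exp s - 1 - s * Δ) := by
        rw [hθ, ht, hp]
        push_cast
        field_simp
      rw [h5]
      calc ((K : ℝ) * N1 / D) * (Real.exp s - 1 - s * Δ)
          ≤ ((K : ℝ) * N1 / D) * (-((Δ - 1) * L)) := by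
            exact mul_le_mul_of_nonneg_left hkey hc
        _ = -((Δ - 1) * L * ((K : ℝ) * N1 / D)) := by ring
    have hst : (0 : ℝ) < Real.exp (s * t) := Real.exp_pos _
    have h6 : ((Bad (B, A)).card : ℝ)
        ≤ (M : ℝ) ^ (N * N1) * Real.exp (((K * N1 : ℕ) : ℝ) * θ - s * t) := by
      rw [Real.exp_sub, ← mul_div_assoc, le_div_iff₀ hst]
      exact key2
    rw [hβ]
    exact h6.trans (mul_le_mul_of_nonneg_left (Real.exp_le_exp.mpr hexp) (by positivity))
  -- global count
  have hPcard : (P.card : ℝ) ≤ (N : ℝ) ^ K * (Real.exp 1 * D) ^ a := by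
    rw [hP, Finset.card_product, Finset.card_powersetCard, Finset.card_powersetCard,
      Finset.card_univ, Finset.card_univ, Fintype.card_fin, Fintype.card_fin]
    push_cast
    have h1 : ((N.choose K : ℕ) : ℝ) ≤ (N : ℝ) ^ K := by
      exact_mod_cast Nat.choose_le_pow N K
    have h2 := aux_choose M D hD hdvd
    rw [← ha] at h2
    exact mul_le_mul h1 h2 (by positivity) (by positivity)
  have hβ0 : 0 ≤ β := by rw [hβ]; positivity
  have hMpow : (0 : ℝ) < (M : ℝ) ^ (N * N1) := by positivity
  have hchain : (M : ℝ) ^ (N * N1) ≤ (P.card : ℝ) * β := by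
    calc (M : ℝ) ^ (N * N1) = ((Fintype.card (Fin N → Fin N1 → Fin M) : ℕ) : ℝ) :=
          hcard_univ.symm
      _ = ((Finset.univ : Finset (Fin N → Fin N1 → Fin M)).card : ℝ) := by
          rw [Finset.card_univ]
      _ ≤ (((P.biUnion Bad).card : ℕ) : ℝ) := by
          exact_mod_cast Finset.card_le_card hcover
      _ ≤ ((∑ BA ∈ P, (Bad BA).card : ℕ) : ℝ) := by
          exact_mod_cast Finset.card_biUnion_le
      _ = ∑ BA ∈ P, ((Bad BA).card : ℝ) := by push_cast; rfl
      _ ≤ ∑ _BA ∈ P, β := Finset.sum_le_sum hpair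
      _ = (P.card : ℝ) * β := by rw [Finset.sum_const, nsmul_eq_mul]
  have hfinal : (P.card : ℝ) * β < (M : ℝ) ^ (N * N1) := by
    calc (P.card : ℝ) * β ≤ ((N : ℝ) ^ K * (Real.exp 1 * D) ^ a) * β :=
          mul_le_mul_of_nonneg_right hPcard hβ0
      _ = ((N : ℝ) ^ K * (Real.exp 1 * D) ^ a *
            Real.exp (-((Δ - 1) * L * ((K : ℝ) * N1 / D)))) * (M : ℝ) ^ (N * N1) := by
          rw [hβ]; ring
      _ < 1 * (M : ℝ) ^ (N * N1) := by
          refine mul_lt_mul_of_pos_right ?_ hMpow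
          rw [hL]
          exact hsmall
      _ = (M : ℝ) ^ (N * N1) := one_mul _
  linarith
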